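/- Let f : X → X be an expansive homeomorphism of a compact metric space X with expansiveness constant δ. Define the local stable set W^s_ε(x) = { y : d(fⁿ(x), fⁿ(y)) ≤ ε for all n ≥ 0 }. Then for every 0 < γ < δ there exists N ∈ ℕ such that fⁿ(W^s_δ(x)) ⊆ W^s_γ(fⁿ(x)) for all n ≥ N and all x ∈ X. -/

import Mathlib

open Metric Filter Topology Set

/-- Local stable set of an invertible map. -/
def Ws {X : Type*} [MetricSpace X] (f : Equiv.Perm X) (ε : ℝ) (x : X) : Set X :=
  {y | ∀ n : ℕ, dist ((f ^ n) x) ((f ^ n) y) ≤ ε}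

/-- Uniform contraction of local stable sets of an expansive homeomorphism:
for every 0 < γ < δ there is N such that fⁿ(W^s_δ(x)) ⊆ W^s_γ(fⁿ(x)) for all
n ≥ N and all x. -/
theorem uniform_contraction_stable_sets {X : Type*} [MetricSpace X] [CompactSpace X]
    (f : Equiv.Perm X) (hf : Continuous f) (hf' : Continuous f.symm)
    (δ : ℝ) (hδ : 0 < δ)
    (hexp : ∀ x y : X, (∀ n : ℤ, dist ((f ^ n) x) ((f ^ n) y) ≤ δ) → x = y) :
    ∀ γ : ℝ, 0 < γ → γ < δ → ∃ N : ℕ, ∀ n : ℕ, N ≤ n → ∀ x : X,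
      (f ^ n) '' Ws f δ x ⊆ Ws f γ ((f ^ n) x) := by
  intro γ hγ hγδ
  -- continuity of all integer powers of f
  have cont : ∀ j : ℤ, Continuous fun z : X => (f ^ j) z := by
    intro j
    induction j using Int.induction_on with
    | zero => simpa using continuous_id'
    | succ k ih =>
        have : (fun z : X => (f ^ ((k : ℤ) + 1)) z) = fun z : X => f ((f ^ (k : ℤ)) z) := by
          funext z
          rw [add_comm, zpow_one_add, Equiv.Perm.mul_apply]
        rw [this]
        exact hf.comp ih
    | pred k ih =>
        have : (fun z : X => (f ^ (-(k : ℤ) - 1)) z) = fun z : X => (f ^ (-(k : ℤ))) (f.symm z) := by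
          funext z
          rw [sub_eq_add_neg, zpow_add, Equiv.Perm.mul_apply, zpow_neg_one]
          rfl
        rw [this]
        exact ih.comp hf'
  by_contra hcon
  push_neg at hcon
  -- extract bad sequences
  have key : ∀ N : ℕ, ∃ (m : ℕ) (x y : X), N ≤ m ∧
      (∀ p : ℕ, dist ((f ^ p) x) ((f ^ p) y) ≤ δ) ∧
      γ < dist ((f ^ m) x) ((f ^ m) y) := by
    intro N
    obtain ⟨n, hn, x, hns⟩ := hcon N
    rw [Set.not_subset] at hns
    obtain ⟨w, hw, hw'⟩ := hns
    obtain ⟨y, hy, rfl⟩ := hw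
    simp only [Ws, mem_setOf_eq] at hw'
    push_neg at hw'
    obtain ⟨k, hk⟩ := hw'
    refine ⟨k + n, x, y, le_trans hn (Nat.le_add_left n k), hy, ?_⟩
    have e : ∀ z : X, (f ^ k) ((f ^ n) z) = (f ^ (k + n)) z := by
      intro z
      rw [pow_add, Equiv.Perm.mul_apply]
    rw [e x, e y] at hk
    exact hk
  choose m x y hm hstable hbig using key
  set u : ℕ → X := fun N => (f ^ m N) (x N) with hu_def
  set v : ℕ → X := fun N => (f ^ m N) (y N) with hv_def
  -- shifted distances stay ≤ δ
  have hshift : ∀ (N : ℕ) (j : ℤ), -(N : ℤ) ≤ j →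
      dist ((f ^ j) (u N)) ((f ^ j) (v N)) ≤ δ := by
    intro N j hj
    have hjm : (0 : ℤ) ≤ j + (m N : ℤ) := by
      have : (N : ℤ) ≤ (m N : ℤ) := by exact_mod_cast hm N
      linarith
    set p : ℕ := (j + (m N : ℤ)).toNat with hp
    have hpe : (p : ℤ) = j + (m N : ℤ) := Int.toNat_of_nonneg hjm
    have e : ∀ z : X, (f ^ j) ((f ^ m N) z) = (f ^ p) z := by
      intro z
      have : (f ^ j) ((f ^ m N) z) = (f ^ (j + (m N : ℤ))) z := by
        rw [zpow_add, Equiv.Perm.mul_apply, zpow_natCast]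
      rw [this, ← hpe, zpow_natCast]
    rw [show u N = (f ^ m N) (x N) from rfl, show v N = (f ^ m N) (y N) from rfl, e, e]
    exact hstable N p
  -- subsequence converging in X × X
  obtain ⟨⟨a, b⟩, -, φ, hφ, hab⟩ :=
    isCompact_univ.tendsto_subseq (x := fun N => (u N, v N)) (fun N => mem_univ _)
  have hu : Tendsto (fun N => u (φ N)) atTop (𝓝 a) :=
    (continuous_fst.tendsto _).comp hab
  have hv : Tendsto (fun N => v (φ N)) atTop (𝓝 b) :=
    (continuous_snd.tendsto _).comp hab
  -- a = b by expansiveness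
  have hab_eq : a = b := by
    apply hexp
    intro j
    have hlim : Tendsto (fun N => dist ((f ^ j) (u (φ N))) ((f ^ j) (v (φ N)))) atTop
        (𝓝 (dist ((f ^ j) a) ((f ^ j) b))) :=
      (((cont j).tendsto a).comp hu).dist (((cont j).tendsto b).comp hv)
    refine le_of_tendsto hlim ?_
    filter_upwards [eventually_ge_atTop (-j).toNat] with N hN
    apply hshift
    have h1 : ((-j).toNat : ℤ) ≤ (φ N : ℤ) := by
      exact_mod_cast le_trans hN (hφ.le_apply)
    have h2 : -j ≤ ((-j).toNat : ℤ) := Int.self_le_toNat _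
    linarith
  -- but dist a b ≥ γ > 0
  have hge : γ ≤ dist a b := by
    refine ge_of_tendsto (hu.dist hv) ?_
    filter_upwards with N
    exact (hbig (φ N)).le
  rw [hab_eq, dist_self] at hge
  linarith
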